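/- The transmission outage probability P_to(P_T) = 1 - exp(-θ(σ_C²+σ_B²)/P_T)·((1-e^{-α(1+θP_J/P_T)})/((1+θP_J/P_T)(1-e^{-α})))^{2n-2} is strictly decreasing in P_T for P_T > 0 (with θ, P_J, σ_C², σ_B², α > 0 and n ≥ 1 fixed). -/

import Mathlib

open Real Set

lemma outage_aux_anti : AntitoneOn (fun s : ℝ => (1 - Real.exp (-s)) / s) (Ioi 0) := by
  have hderiv : ∀ s : ℝ, s ≠ 0 → HasDerivAt (fun s : ℝ => (1 - Real.exp (-s)) / s)
      ((Real.exp (-s) * s - (1 - Real.exp (-s)) * 1) / s ^ 2) s := by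
    intro s hs0
    have h1 : HasDerivAt (fun s : ℝ => 1 - Real.exp (-s)) (Real.exp (-s)) s := by
      have h := (Real.hasDerivAt_exp (-s)).comp s (hasDerivAt_neg s)
      have := (hasDerivAt_const s (1:ℝ)).sub h
      exact this.congr_deriv (by ring)
    exact h1.div (hasDerivAt_id s) hs0
  apply antitoneOn_of_deriv_nonpos (convex_Ioi 0)
  · exact ((continuous_const.sub (Real.continuous_exp.comp continuous_neg)).continuousOn.div
      continuousOn_id (fun x hx => ne_of_gt hx))
  · intro x hx
    rw [interior_Ioi] at hx
    exact (hderiv x (ne_of_gt hx)).differentiableAt.differentiableWithinAt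
  · intro s hs
    rw [interior_Ioi] at hs
    rw [(hderiv s (ne_of_gt hs)).deriv]
    apply div_nonpos_of_nonpos_of_nonneg _ (sq_nonneg s)
    have key : Real.exp (-s) * (s + 1) ≤ 1 := by
      have h3 : s + 1 ≤ Real.exp s := Real.add_one_le_exp s
      have h4 : Real.exp (-s) * (s + 1) ≤ Real.exp (-s) * Real.exp s :=
        mul_le_mul_of_nonneg_left h3 (Real.exp_pos _).le
      rwa [← Real.exp_add, neg_add_cancel, Real.exp_zero] at h4
    nlinarith [Real.exp_pos (-s)]

/-- The transmission outage probability
`P_to(P_T) = 1 - exp (-θ(σ_C²+σ_B²)/P_T) * ((1-e^(-α(1+θP_J/P_T)))/((1+θP_J/P_T)(1-e^(-α))))^(2n-2)`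
is strictly decreasing in `P_T` on `(0, ∞)`. -/
theorem outage_strict_anti_in_power
    (n : ℕ) (hn : 1 ≤ n) (θ P_J σC2 σB2 α : ℝ)
    (hθ : 0 < θ) (hPJ : 0 < P_J) (hσC : 0 < σC2) (hσB : 0 < σB2) (hα : 0 < α)
    (P_to : ℝ → ℝ)
    (hPto : ∀ P_T, P_to P_T =
      1 - Real.exp (-θ * (σC2 + σB2) / P_T) *
        ((1 - Real.exp (-α * (1 + θ * P_J / P_T)))
          / ((1 + θ * P_J / P_T) * (1 - Real.exp (-α)))) ^ (2 * n - 2)) :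
    StrictAntiOn P_to (Ioi 0) := by
  intro a ha b hb hab
  rw [mem_Ioi] at ha hb
  rw [hPto a, hPto b]
  -- abbreviations
  set c := θ * (σC2 + σB2) with hc
  have hcpos : 0 < c := by positivity
  have hbp : 0 < θ * P_J := by positivity
  set ua := 1 + θ * P_J / a with hua
  set ub := 1 + θ * P_J / b with hub
  have hua1 : 1 < ua := by
    have : 0 < θ * P_J / a := by positivity
    simp only [hua]; linarith
  have hub1 : 1 < ub := by
    have : 0 < θ * P_J / b := by positivity
    simp only [hub]; linarith
  have huba : ub < ua := by
    have : θ * P_J / b < θ * P_J / a := by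
      apply div_lt_div_of_pos_left hbp ha hab
    simpa [hua, hub] using by linarith
  have hden : 0 < 1 - Real.exp (-α) := by
    have : Real.exp (-α) < 1 := Real.exp_lt_one_iff.mpr (by linarith)
    linarith
  -- positivity of F
  have hFpos : ∀ u : ℝ, 1 < u →
      0 < (1 - Real.exp (-α * u)) / (u * (1 - Real.exp (-α))) := by
    intro u hu
    have hnum : 0 < 1 - Real.exp (-α * u) := by
      have : Real.exp (-α * u) < 1 := Real.exp_lt_one_iff.mpr (by nlinarith)
      linarith
    have hd : 0 < u * (1 - Real.exp (-α)) := by nlinarith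
    exact div_pos hnum hd
  -- F is larger for smaller u (via the antitone aux lemma)
  have hFle : (1 - Real.exp (-α * ua)) / (ua * (1 - Real.exp (-α))) ≤
      (1 - Real.exp (-α * ub)) / (ub * (1 - Real.exp (-α))) := by
    have h1 : (1 - Real.exp (-(α * ua))) / (α * ua) ≤
        (1 - Real.exp (-(α * ub))) / (α * ub) := by
      apply outage_aux_anti (mem_Ioi.mpr (by nlinarith)) (mem_Ioi.mpr (by nlinarith))
      nlinarith
    have hapos := hα
    have h2 : (1 - Real.exp (-(α * ua))) / ua ≤ (1 - Real.exp (-(α * ub))) / ub := by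
      calc (1 - Real.exp (-(α * ua))) / ua
          = α * ((1 - Real.exp (-(α * ua))) / (α * ua)) := by
            field_simp
        _ ≤ α * ((1 - Real.exp (-(α * ub))) / (α * ub)) := mul_le_mul_of_nonneg_left h1 hapos.le
        _ = (1 - Real.exp (-(α * ub))) / ub := by
            field_simp
    have h3 : (1 - Real.exp (-(α * ua))) / ua / (1 - Real.exp (-α)) ≤ (1 - Real.exp (-(α * ub))) / ub / (1 - Real.exp (-α)) := by gcongr
    calc (1 - Real.exp (-α * ua)) / (ua * (1 - Real.exp (-α)))
        = (1 - Real.exp (-(α * ua))) / ua / (1 - Real.exp (-α)) := by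
          rw [neg_mul, div_div]
      _ ≤ (1 - Real.exp (-(α * ub))) / ub / (1 - Real.exp (-α)) := h3
      _ = (1 - Real.exp (-α * ub)) / (ub * (1 - Real.exp (-α))) := by
          rw [neg_mul, div_div]
  -- exp factor strictly increases
  have hexplt : Real.exp (-c / a) < Real.exp (-c / b) := by
    apply Real.exp_lt_exp.mpr
    rw [neg_div, neg_div, neg_lt_neg_iff]
    exact div_lt_div_of_pos_left hcpos ha hab
  set m := 2 * n - 2 with hm
  have hFa := hFpos ua hua1
  have hFb := hFpos ub hub1
  have key : Real.exp (-c / a) *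
        ((1 - Real.exp (-α * ua)) / (ua * (1 - Real.exp (-α)))) ^ m <
      Real.exp (-c / b) *
        ((1 - Real.exp (-α * ub)) / (ub * (1 - Real.exp (-α)))) ^ m := by
    calc Real.exp (-c / a) * ((1 - Real.exp (-α * ua)) / (ua * (1 - Real.exp (-α)))) ^ m
        < Real.exp (-c / b) * ((1 - Real.exp (-α * ua)) / (ua * (1 - Real.exp (-α)))) ^ m := by
          apply mul_lt_mul_of_pos_right hexplt (pow_pos hFa m)
      _ ≤ Real.exp (-c / b) * ((1 - Real.exp (-α * ub)) / (ub * (1 - Real.exp (-α)))) ^ m := by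
          apply mul_le_mul_of_nonneg_left _ (Real.exp_pos _).le
          exact pow_le_pow_left₀ hFa.le hFle m
  have ea : -θ * (σC2 + σB2) / a = -c / a := by rw [hc]; ring
  have eb : -θ * (σC2 + σB2) / b = -c / b := by rw [hc]; ring
  rw [ea, eb]
  linarith [key]
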